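/- Let k be a commutative ring, λ ∈ k, and let M be the free k-module with basis {u_n : n ≥ 0} equipped with the product ⋄ determined by u_m ⋄ u_n = Σ_{r=0}^{min(m,n)} C(m+n−r, m)·C(m, r)·(−λ²)^r·u_{m+n−2r}. Define the k-linear map ε : M → k by ε(u_n) = (−λ)^n. Then ε is multiplicative: ε(a ⋄ b) = ε(a)·ε(b) for all a, b ∈ M; equivalently, for all m, n ≥ 0, Σ_{r=0}^{min(m,n)} C(m+n−r, m)·C(m, r)·(−λ²)^r·(−λ)^{m+n−2r} = (−λ)^{m+n}. -/

import Mathlib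

/-- The basis vectors `u n = single n 1` of the free `k`-module `ℕ →₀ k`. -/
noncomputable def uvec {k : Type*} [CommRing k] (n : ℕ) : ℕ →₀ k := Finsupp.single n 1

/-- Alternating sum identity: `∑_{r=0}^{n} (-1)^r C(m+n-r, m) C(m, r) = 1`. -/
lemma intkey (m n : ℕ) :
    ∑ r ∈ Finset.range (n + 1),
      (-1 : ℤ) ^ r * ((m + n - r).choose m : ℤ) * (m.choose r : ℤ) = 1 := by
  induction m with
  | zero =>
    rw [Finset.sum_eq_single 0]
    · simp
    · intro r _ hr
      have : Nat.choose 0 r = 0 := Nat.choose_eq_zero_of_lt (Nat.pos_of_ne_zero hr)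
      simp [this]
    · simp
  | succ m ih =>
    set W : ℕ → ℤ := fun j => match j with
      | 0 => 0
      | s + 1 => (-1 : ℤ) ^ s * (m.choose s : ℤ) * ((m + n - s).choose (m + 1) : ℤ) with hW
    have key : ∀ r ∈ Finset.range (n + 1),
        (-1 : ℤ) ^ r * (((m + 1) + n - r).choose (m + 1) : ℤ) * ((m + 1).choose r : ℤ)
          = (-1 : ℤ) ^ r * ((m + n - r).choose m : ℤ) * (m.choose r : ℤ)
            + (W (r + 1) - W r) := by
      intro r hr
      simp only [Finset.mem_range] at hr
      match r with
      | 0 =>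
        have h1 : m + 1 + n = (m + n) + 1 := by omega
        simp only [hW, Nat.sub_zero, h1, Nat.choose_succ_succ, Nat.choose_zero_right,
          pow_zero]
        push_cast
        ring
      | s + 1 =>
        have hs : s < n := by omega
        obtain ⟨a, ha⟩ : ∃ a, m + n - s - 1 = a := ⟨_, rfl⟩
        have h1 : (m + 1) + n - (s + 1) = a + 1 := by omega
        have h2 : m + n - s = a + 1 := by omega
        have h3 : m + n - (s + 1) = a := by omega
        simp only [hW, h1, h2, h3, Nat.choose_succ_succ]
        push_cast
        ring
    rw [Finset.sum_congr rfl key, Finset.sum_add_distrib, ih,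
      Finset.sum_range_sub W]
    have hWn : W (n + 1) = 0 := by
      simp only [hW, Nat.add_sub_cancel_left]
      have : m + n - n = m := by omega
      rw [this, Nat.choose_eq_zero_of_lt (show m < m + 1 by omega)]
      simp
    simp [hWn, hW]

lemma intkey_min (m n : ℕ) :
    ∑ r ∈ Finset.range (min m n + 1),
      (-1 : ℤ) ^ r * ((m + n - r).choose m : ℤ) * (m.choose r : ℤ) = 1 := by
  rcases le_total n m with h | h
  · rw [min_eq_right h]; exact intkey m n
  · rw [min_eq_left h]
    refine Eq.trans ?_ (intkey m n)
    apply Finset.sum_subset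
    · intro x hx
      simp only [Finset.mem_range] at *
      omega
    · intro x _ hx
      simp only [Finset.mem_range, not_lt] at hx
      rw [Nat.choose_eq_zero_of_lt (show m < x by omega)]
      simp

lemma key_k {k : Type*} [CommRing k] (lam : k) (m n : ℕ) :
    ∑ r ∈ Finset.range (min m n + 1),
      (((m + n - r).choose m * m.choose r : ℕ) : k) * (-lam ^ 2) ^ r *
        (-lam) ^ (m + n - 2 * r) = (-lam) ^ (m + n) := by
  have step : ∀ r ∈ Finset.range (min m n + 1),
      (((m + n - r).choose m * m.choose r : ℕ) : k) * (-lam ^ 2) ^ r *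
        (-lam) ^ (m + n - 2 * r)
      = (((-1 : ℤ) ^ r * ((m + n - r).choose m : ℤ) * (m.choose r : ℤ) : ℤ) : k)
          * (-lam) ^ (m + n) := by
    intro r hr
    simp only [Finset.mem_range] at hr
    have e1 : 2 * r + (m + n - 2 * r) = m + n := by omega
    have e2 : (-lam) ^ (m + n) = (lam ^ 2) ^ r * (-lam) ^ (m + n - 2 * r) := by
      rw [show (lam ^ 2) ^ r = (-lam) ^ (2 * r) from by rw [pow_mul, neg_sq],
        ← pow_add, e1]
    rw [e2, neg_pow (lam ^ 2) r]
    push_cast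
    ring
  rw [Finset.sum_congr rfl step, ← Finset.sum_mul, ← Int.cast_sum, intkey_min]
  simp

/-- For the modified quasi-shuffle product `⋄` of weight `-λ²` determined by
`u_m ⋄ u_n = Σ_{r=0}^{min(m,n)} C(m+n-r, m) C(m, r) (-λ²)^r • u_{m+n-2r}`, the linear map
`ε(u_n) = (-λ)^n` is multiplicative: `ε(a ⋄ b) = ε(a) ε(b)`; equivalently,
`Σ_{r=0}^{min(m,n)} C(m+n-r, m) C(m, r) (-λ²)^r (-λ)^{m+n-2r} = (-λ)^{m+n}`. -/
theorem stmt_18 {k : Type*} [CommRing k] (lam : k)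
    (D : (ℕ →₀ k) →ₗ[k] (ℕ →₀ k) →ₗ[k] (ℕ →₀ k))
    (hD : ∀ m n : ℕ, D (uvec m) (uvec n) =
      ∑ r ∈ Finset.range (min m n + 1),
        ((((m + n - r).choose m * m.choose r : ℕ) : k) * (-lam ^ 2) ^ r) •
          (uvec (m + n - 2 * r) : ℕ →₀ k))
    (ε : (ℕ →₀ k) →ₗ[k] k)
    (hε : ∀ n : ℕ, ε (uvec n) = (-lam) ^ n) :
    (∀ a b : ℕ →₀ k, ε (D a b) = ε a * ε b) ∧
    (∀ m n : ℕ,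
      ∑ r ∈ Finset.range (min m n + 1),
        (((m + n - r).choose m * m.choose r : ℕ) : k) * (-lam ^ 2) ^ r *
          (-lam) ^ (m + n - 2 * r) = (-lam) ^ (m + n)) := by
  have part2 := key_k lam
  have hbasis : ∀ m n : ℕ, ε (D (uvec m) (uvec n)) = ε (uvec m) * ε (uvec n) := by
    intro m n
    rw [hD, map_sum]
    simp only [map_smul, hε, smul_eq_mul]
    rw [← pow_add, ← part2 m n]
  refine ⟨?_, part2⟩
  intro a b
  induction a using Finsupp.induction_linear with
  | zero => simp
  | add f g hf hg => simp [map_add, hf, hg, add_mul]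
  | single i c =>
    induction b using Finsupp.induction_linear with
    | zero => simp
    | add f g hf hg => simp [map_add, hf, hg, mul_add]
    | single j d =>
      have hi : (Finsupp.single i c : ℕ →₀ k) = c • uvec i := by
        simp [uvec, Finsupp.smul_single]
      have hj : (Finsupp.single j d : ℕ →₀ k) = d • uvec j := by
        simp [uvec, Finsupp.smul_single]
      rw [hi, hj]
      simp only [map_smul, LinearMap.smul_apply, smul_eq_mul]
      rw [hbasis i j]
      ring
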